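/- arXiv:math/0505437 — 2 statements merged into one kernel-verified Lean document; each statement's English description precedes it below -/
import Mathlib

section
/- For every real number z with 0 < |z| < π, the series Σ_{p=0}^{∞} D_p z^{2p} converges and its sum equals z / sin z. -/
open scoped BigOperators Real NNReal ENNReal
open FormalMultilinearSeries

/-- `D 0 = 1` and, for `k ≥ 1`, `D k` is the determinant of the `k × k` rational matrix
whose `(i, j)` entry is `1/(2(j-i)+3)!` when `j ≥ i`, `1` when `j = i - 1`,
and `0` when `j < i - 1`. -/
def D : ℕ → ℚ
  | 0 => 1
  | k + 1 =>
    Matrix.det (fun i j : Fin (k + 1) =>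
      if (i : ℕ) ≤ (j : ℕ) then 1 / ((2 * ((j : ℕ) - (i : ℕ)) + 3).factorial : ℚ)
      else if (j : ℕ) + 1 = (i : ℕ) then 1 else 0)

/-! ### Determinant recurrence -/


def hess (a : ℕ → ℚ) (n : ℕ) : Matrix (Fin n) (Fin n) ℚ :=
  Matrix.of fun i j => if (i:ℕ) ≤ (j:ℕ) then a ((j:ℕ) - (i:ℕ)) else if (j:ℕ)+1 = (i:ℕ) then 1 else 0

lemma hess_minor (a : ℕ → ℚ) (k : ℕ) (j : Fin (k+1)) :
    ((hess a (k+1)).submatrix Fin.succ j.succAbove).det = (hess a (k - (j:ℕ))).det := by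
  have hj : (j:ℕ) ≤ k := Fin.is_le j
  have hsum : (j:ℕ) + (k - (j:ℕ)) = k := by omega
  set B := (hess a (k+1)).submatrix Fin.succ j.succAbove with hB
  let e : Fin (j:ℕ) ⊕ Fin (k - (j:ℕ)) ≃ Fin k := finSumFinEquiv.trans (finCongr hsum)
  rw [← Matrix.det_submatrix_equiv_self e B]
  set M := B.submatrix e e with hM
  have hval : ∀ x : Fin k, ((j.succAbove x : Fin (k+1)) : ℕ)
      = if (x:ℕ) < (j:ℕ) then (x:ℕ) else (x:ℕ)+1 := by
    intro x
    rcases lt_or_ge (x:ℕ) (j:ℕ) with h | h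
    · rw [Fin.succAbove_of_castSucc_lt _ _ (by simpa [Fin.lt_def] using h)]
      simp [h]
    · rw [Fin.succAbove_of_le_castSucc _ _ (by simpa [Fin.le_def] using h)]
      simp [Nat.not_lt.mpr h]
  have hBentry : ∀ (r c : Fin k), B r c =
      (if (r:ℕ)+1 ≤ ((j.succAbove c : Fin (k+1)) : ℕ)
        then a (((j.succAbove c : Fin (k+1)) : ℕ) - ((r:ℕ)+1))
        else if ((j.succAbove c : Fin (k+1)) : ℕ)+1 = (r:ℕ)+1 then 1 else 0) := by
    intro r c
    simp only [hB, Matrix.submatrix_apply, hess, Matrix.of_apply, Fin.val_succ]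
  have hel : ∀ x : Fin (j:ℕ), ((e (Sum.inl x) : Fin k) : ℕ) = (x:ℕ) := by
    intro x; simp [e]
  have her : ∀ x : Fin (k - (j:ℕ)), ((e (Sum.inr x) : Fin k) : ℕ) = (j:ℕ) + (x:ℕ) := by
    intro x; simp [e]
  have hcol_l : ∀ x : Fin (j:ℕ), ((j.succAbove (e (Sum.inl x)) : Fin (k+1)) : ℕ) = (x:ℕ) := by
    intro x
    rw [hval, hel]
    exact if_pos x.isLt
  have hcol_r : ∀ x : Fin (k - (j:ℕ)),
      ((j.succAbove (e (Sum.inr x)) : Fin (k+1)) : ℕ) = (j:ℕ) + (x:ℕ) + 1 := by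
    intro x
    rw [hval, her]
    exact if_neg (by omega)
  have h21 : M.toBlocks₂₁ = 0 := by
    ext r c
    have hc := c.isLt
    simp only [Matrix.toBlocks₂₁, Matrix.of_apply, Matrix.zero_apply, hM, Matrix.submatrix_apply]
    rw [hBentry, hcol_l, her]
    split_ifs with h1 h2
    · exfalso; omega
    · exfalso; omega
    · rfl
  have h22 : M.toBlocks₂₂ = hess a (k - (j:ℕ)) := by
    ext r c
    simp only [Matrix.toBlocks₂₂, Matrix.of_apply, hM, Matrix.submatrix_apply]
    rw [hBentry, hcol_r, her]
    simp only [hess, Matrix.of_apply]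
    split_ifs <;> first | rfl | (exfalso; omega) | (congr 1; omega)
  have h11tri : M.toBlocks₁₁.BlockTriangular id := by
    intro r c hrc
    simp only [_root_.id] at hrc
    have hrc' : (c:ℕ) < (r:ℕ) := hrc
    simp only [Matrix.toBlocks₁₁, Matrix.of_apply, hM, Matrix.submatrix_apply]
    rw [hBentry, hcol_l, hel]
    split_ifs <;> first | rfl | (exfalso; omega)
  have h11diag : ∀ i, M.toBlocks₁₁ i i = 1 := by
    intro i
    simp only [Matrix.toBlocks₁₁, Matrix.of_apply, hM, Matrix.submatrix_apply]
    rw [hBentry, hcol_l, hel]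
    split_ifs <;> first | rfl | (exfalso; omega)
  have hdet11 : M.toBlocks₁₁.det = 1 := by
    rw [Matrix.det_of_upperTriangular h11tri]
    simp [h11diag]
  calc M.det = (Matrix.fromBlocks M.toBlocks₁₁ M.toBlocks₁₂ 0 (hess a (k - (j:ℕ)))).det := by
        rw [← h21, ← h22, Matrix.fromBlocks_toBlocks]
    _ = M.toBlocks₁₁.det * (hess a (k - (j:ℕ))).det := Matrix.det_fromBlocks_zero₂₁ _ _ _
    _ = (hess a (k - (j:ℕ))).det := by rw [hdet11, one_mul]

lemma hess_det_succ (a : ℕ → ℚ) (k : ℕ) :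
    (hess a (k+1)).det = ∑ j : Fin (k+1), (-1)^(j:ℕ) * a j * (hess a (k - (j:ℕ))).det := by
  rw [Matrix.det_succ_row_zero]
  refine Finset.sum_congr rfl fun j _ => ?_
  rw [hess_minor]
  congr 1

noncomputable def aQ : ℕ → ℚ := fun n => 1 / ((2*n+3).factorial : ℚ)
noncomputable def cQ : ℕ → ℚ := fun n => (-1)^n / ((2*n+1).factorial : ℚ)

lemma D_eq_hess (n : ℕ) : D n = (hess aQ n).det := by
  cases n with
  | zero => simp [D, hess, Matrix.det_isEmpty]
  | succ k => rfl

lemma D_rec (k : ℕ) :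
    D (k+1) = ∑ j ∈ Finset.range (k+1), (-1)^j * aQ j * D (k - j) := by
  rw [D_eq_hess, hess_det_succ, Fin.sum_univ_eq_sum_range
    (fun j => (-1:ℚ)^j * aQ j * (hess aQ (k - j)).det)]
  exact Finset.sum_congr rfl fun j _ => by rw [D_eq_hess]

lemma conv (m : ℕ) :
    ∑ i ∈ Finset.range (m+1), D i * cQ (m - i) = if m = 0 then 1 else 0 := by
  cases m with
  | zero => simp [D, cQ]
  | succ k =>
    rw [if_neg (Nat.succ_ne_zero k), Finset.sum_range_succ]
    have hc0 : cQ (k+1 - (k+1)) = 1 := by simp [cQ]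
    rw [hc0, mul_one]
    have hrec := D_rec k
    rw [← Finset.sum_range_reflect (fun j => (-1:ℚ)^j * aQ j * D (k - j))] at hrec
    simp only [Nat.add_sub_cancel] at hrec
    have : ∀ j ∈ Finset.range (k+1),
        (-1:ℚ)^(k - j) * aQ (k - j) * D (k - (k - j)) = -(D j * cQ (k+1 - j)) := by
      intro j hj
      rw [Finset.mem_range] at hj
      have hjk : j ≤ k := by omega
      have h1 : k - (k - j) = j := by omega
      have h2 : k + 1 - j = (k - j) + 1 := by omega
      rw [h1, h2]
      simp only [aQ, cQ, pow_succ]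
      have h3 : 2 * ((k-j)+1) + 1 = 2*(k-j)+3 := by ring
      rw [h3]
      field_simp
    rw [Finset.sum_congr rfl this] at hrec
    rw [hrec]
    simp [Finset.sum_neg_distrib]

/-! ### Analytic part -/


noncomputable def cc : ℕ → ℂ :=
  fun n => if Even n then (-1)^(n/2) * (((n+1).factorial : ℂ))⁻¹ else 0

lemma cc_zero : cc 0 = 1 := by simp [cc]

lemma cc_two_mul (m : ℕ) : cc (2*m) = ((cQ m : ℚ) : ℂ) := by
  simp only [cc, cQ, if_pos (even_two_mul m)]
  rw [Nat.mul_div_cancel_left m (by norm_num)]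
  push_cast
  rw [div_eq_mul_inv]

lemma cc_odd {n : ℕ} (h : ¬ Even n) : cc n = 0 := if_neg h

lemma norm_cc_le (n : ℕ) : ‖cc n‖ ≤ ((n.factorial : ℝ))⁻¹ := by
  by_cases h : Even n
  · simp only [cc, if_pos h, norm_mul, norm_pow, norm_neg, norm_one, one_pow, one_mul,
      norm_inv, Complex.norm_natCast]
    apply inv_anti₀
    · exact_mod_cast Nat.factorial_pos n
    · exact_mod_cast Nat.factorial_le (Nat.le_succ n)
  · simp only [cc, if_neg h, norm_zero]
    positivity

lemma summable_norm_cc (z : ℂ) : Summable (fun n => ‖cc n * z^n‖) := by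
  have hb : Summable (fun n : ℕ => ‖z‖^n / (n.factorial : ℝ)) :=
    Real.summable_pow_div_factorial ‖z‖
  refine Summable.of_nonneg_of_le (fun n => norm_nonneg _) (fun n => ?_) hb
  rw [norm_mul, norm_pow, div_eq_mul_inv, mul_comm (‖z‖^n)]
  exact mul_le_mul_of_nonneg_right (norm_cc_le n) (by positivity)

noncomputable def gg : ℂ → ℂ := fun z => ∑' n, cc n * z^n

lemma hasSum_gg (z : ℂ) : HasSum (fun n => cc n * z^n) (gg z) :=
  ((summable_norm_cc z).of_norm).hasSum

lemma two_mul_injective : Function.Injective (fun m : ℕ => 2*m) := by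
  intro a b hab
  simp only at hab
  omega

lemma gg_mul (z : ℂ) : gg z * z = Complex.sin z := by
  have h1 : HasSum (fun n => cc n * z^(n+1)) (gg z * z) := by
    have := (hasSum_gg z).mul_right z
    simpa [mul_assoc, pow_succ] using this
  have h2 : HasSum ((fun n => cc n * z^(n+1)) ∘ (fun m : ℕ => 2*m)) (gg z * z) := by
    refine (Function.Injective.hasSum_iff two_mul_injective ?_).mpr h1
    intro n hn
    have : ¬ Even n := by
      rintro ⟨r, hr⟩
      exact hn ⟨r, by show 2*r = n; omega⟩
    simp [cc_odd this]
  have h3 := Complex.hasSum_sin z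
  have h4 : HasSum (fun m : ℕ => (-1)^m * z^(2*m+1) / ((2*m+1).factorial : ℂ)) (gg z * z) := by
    refine h2.congr_fun fun m => ?_
    show _ = cc (2*m) * z^(2*m+1)
    simp only [cc, if_pos (even_two_mul m), Nat.mul_div_cancel_left m (by norm_num : 0 < 2)]
    rw [div_eq_mul_inv]
    ring
  exact h4.unique h3

lemma gg_zero : gg 0 = 1 := by
  have h1 : HasSum (fun n => cc n * (0:ℂ)^n) (gg 0) := hasSum_gg 0
  have h2 : HasSum (fun n => cc n * (0:ℂ)^n) (cc 0 * (0:ℂ)^0) := by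
    apply hasSum_single
    intro n hn
    rw [zero_pow hn, mul_zero]
  rw [cc_zero] at h2
  simpa using h1.unique h2

lemma gg_ne (z : ℂ) (h : ‖z‖ < π) : gg z ≠ 0 := by
  by_cases hz : z = 0
  · rw [hz, gg_zero]; exact one_ne_zero
  · intro hgg
    have hsin : Complex.sin z = 0 := by rw [← gg_mul, hgg, zero_mul]
    rw [Complex.sin_eq_zero_iff] at hsin
    obtain ⟨k, hk⟩ := hsin
    have hk0 : k ≠ 0 := by
      intro h0; apply hz; rw [hk, h0]; simp
    have hπ : (π : ℝ) ≤ ‖z‖ := by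
      rw [hk, norm_mul]
      have h1 : ‖(k:ℂ)‖ = |(k:ℝ)| := by
        rw [show ((k:ℂ)) = ((k:ℝ):ℂ) by push_cast; ring, Complex.norm_real, Real.norm_eq_abs]
      have h2 : ‖((π:ℝ):ℂ)‖ = π := by
        rw [Complex.norm_real, Real.norm_eq_abs, abs_of_pos Real.pi_pos]
      rw [h1, h2]
      have h3 : (1:ℝ) ≤ |(k:ℝ)| := by
        rw [← Int.cast_abs]
        exact_mod_cast Int.one_le_abs (by omega)
      nlinarith [Real.pi_pos]
    linarith

lemma gg_radius : (ofScalars ℂ cc).radius = ⊤ := by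
  refine FormalMultilinearSeries.radius_eq_top_of_summable_norm _ fun r => ?_
  refine (summable_norm_cc ((r:ℝ):ℂ)).congr fun n => ?_
  rw [norm_mul, norm_pow, ofScalars_norm, Complex.norm_real, Real.norm_eq_abs,
    abs_of_nonneg r.coe_nonneg]

lemma gg_series : HasFPowerSeriesOnBall gg (ofScalars ℂ cc) 0 ⊤ := by
  constructor
  · rw [gg_radius]
  · exact ENNReal.zero_lt_top
  · intro y _
    rw [zero_add]
    refine (hasSum_gg y).congr_fun fun n => ?_
    rw [ofScalars_apply_eq, smul_eq_mul]

lemma gg_diff : Differentiable ℂ gg := fun z =>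
  (gg_series.analyticAt_of_mem (by rw [EMetric.mem_ball]; exact edist_lt_top _ _)).differentiableAt

def dd : ℕ → ℂ := fun n => if n = 0 then 1 else 0

noncomputable def ff : ℂ → ℂ := fun z => (gg z)⁻¹

noncomputable def qq (r : ℝ≥0) : FormalMultilinearSeries ℂ ℂ ℂ := cauchyPowerSeries ff 0 r

section

variable {r : ℝ≥0} (hr0 : 0 < r) (hrπ : (r:ℝ) < π)

include hr0 hrπ

lemma hq : HasFPowerSeriesOnBall ff (qq r) 0 r := by
  refine DifferentiableOn.hasFPowerSeriesOnBall ?_ hr0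
  refine DifferentiableOn.inv gg_diff.differentiableOn fun z hz => gg_ne z ?_
  rw [Metric.mem_closedBall, dist_zero_right] at hz
  linarith

lemma hasSum_ff {z : ℂ} (h : ‖z‖ < r) :
    HasSum (fun n => (qq r).coeff n * z^n) (ff z) := by
  have hz : z ∈ Metric.eball (0:ℂ) r := by
    rw [EMetric.mem_ball, edist_zero_right, enorm_eq_nnnorm, ENNReal.coe_lt_coe, ← NNReal.coe_lt_coe, coe_nnnorm]
    exact h
  have := (hq hr0 hrπ).hasSum hz
  rw [zero_add] at this
  exact this.congr_fun fun n => by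
    rw [FormalMultilinearSeries.apply_eq_pow_smul_coeff, smul_eq_mul, mul_comm]

lemma summable_norm_coeff {z : ℂ} (h : ‖z‖ < r) :
    Summable (fun n => ‖(qq r).coeff n * z^n‖) := by
  have hrad : (‖z‖₊ : ℝ≥0∞) < (qq r).radius := by
    refine lt_of_lt_of_le ?_ (hq hr0 hrπ).r_le
    rw [ENNReal.coe_lt_coe, ← NNReal.coe_lt_coe, coe_nnnorm]
    exact h
  refine ((qq r).summable_norm_mul_pow hrad).congr fun n => ?_
  rw [FormalMultilinearSeries.norm_apply_eq_norm_coef, norm_mul, norm_pow, coe_nnnorm]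

noncomputable def ss (r : ℝ≥0) : ℕ → ℂ :=
  fun n => ∑ k ∈ Finset.range (n+1), (qq r).coeff k * cc (n - k)

lemma hasSum_ss {z : ℂ} (h : ‖z‖ < r) : HasSum (fun n => ss r n * z^n) 1 := by
  have ha := summable_norm_coeff hr0 hrπ h
  have hb := summable_norm_cc z
  have hprod : Summable (fun n => ∑ k ∈ Finset.range (n+1),
      ((qq r).coeff k * z^k) * (cc (n-k) * z^(n-k))) :=
    (summable_norm_sum_mul_range_of_summable_norm ha hb).of_norm
  have htsum := tsum_mul_tsum_eq_tsum_sum_range_of_summable_norm ha hb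
  rw [(hasSum_ff hr0 hrπ h).tsum_eq, (hasSum_gg z).tsum_eq] at htsum
  have hfg : ff z * gg z = 1 := inv_mul_cancel₀ (gg_ne z (by linarith))
  have h1 : HasSum (fun n => ∑ k ∈ Finset.range (n+1),
      ((qq r).coeff k * z^k) * (cc (n-k) * z^(n-k))) 1 := by
    have := hprod.hasSum
    rw [← htsum, hfg] at this
    exact this
  refine h1.congr_fun fun n => ?_
  rw [ss, Finset.sum_mul]
  refine Finset.sum_congr rfl fun k hk => ?_
  rw [Finset.mem_range] at hk
  rw [show ((qq r).coeff k * z^k) * (cc (n-k) * z^(n-k))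
      = (qq r).coeff k * cc (n-k) * (z^k * z^(n-k)) from by ring, ← pow_add,
    show k + (n-k) = n from by omega]

lemma ss_eq : ∀ n, ss r n = if n = 0 then 1 else 0 := by
  set ρ : ℝ≥0 := min r 1 / 2 with hρ
  have hρ0 : 0 < ρ := by
    rw [hρ]; positivity
  have hρc : (ρ:ℝ) = (min (r:ℝ) 1)/2 := by
    rw [hρ]; push_cast; ring
  have hρr : (ρ:ℝ) < r := by
    have h1 : (0:ℝ) < r := hr0
    have h2 := min_le_left (r:ℝ) 1
    rw [hρc]; linarith
  have hρ1 : (ρ:ℝ) < 1 := by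
    have := min_le_right (r:ℝ) 1
    rw [hρc]; linarith
  have hρπ : ‖((ρ:ℝ):ℂ)‖ < r := by
    rw [Complex.norm_real, Real.norm_eq_abs, abs_of_nonneg ρ.coe_nonneg]
    exact hρr
  have hsum1 : HasSum (fun n => ss r n * ((ρ:ℝ):ℂ)^n) 1 := hasSum_ss hr0 hrπ hρπ
  obtain ⟨C, hC⟩ : BddAbove (Set.range fun n => ‖ss r n * ((ρ:ℝ):ℂ)^n‖) :=
    hsum1.summable.tendsto_atTop_zero.norm.bddAbove_range
  have hub : ∀ n, ‖ofScalars ℂ (ss r) n‖ * (ρ:ℝ)^n ≤ C := by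
    intro n
    have h2 := hC (Set.mem_range_self n)
    rw [norm_mul, norm_pow, Complex.norm_real, Real.norm_eq_abs,
      abs_of_nonneg ρ.coe_nonneg] at h2
    rwa [ofScalars_norm]
  have hS : HasFPowerSeriesOnBall (fun _ : ℂ => (1:ℂ)) (ofScalars ℂ (ss r)) 0 ρ := by
    constructor
    · exact (ofScalars ℂ (ss r)).le_radius_of_bound C hub
    · exact_mod_cast hρ0
    · intro y hy
      rw [EMetric.mem_ball, edist_zero_right, enorm_eq_nnnorm, ENNReal.coe_lt_coe,
        ← NNReal.coe_lt_coe, coe_nnnorm] at hy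
      exact (hasSum_ss hr0 hrπ (lt_trans hy hρr)).congr_fun fun n => by
        rw [ofScalars_apply_eq, smul_eq_mul]
  have hΔrad : (ofScalars ℂ dd).radius = ⊤ := by
    apply FormalMultilinearSeries.radius_eq_top_of_forall_image_add_eq_zero _ 1
    intro m
    exact ofScalars_eq_zero_of_scalar_zero ℂ (show dd (m+1) = 0 from rfl)
  have hΔ : HasFPowerSeriesOnBall (fun _ : ℂ => (1:ℂ)) (ofScalars ℂ dd) 0 ρ := by
    constructor
    · rw [hΔrad]; exact le_top
    · exact_mod_cast hρ0
    · intro y _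
      have h2 : HasSum (fun n : ℕ => dd n * y^n) (dd 0 * y^0) := by
        apply hasSum_single
        intro b hb
        rw [show dd b = 0 from if_neg hb, zero_mul]
      have h20 : dd 0 * y^0 = 1 := by simp [dd]
      rw [h20] at h2
      exact h2.congr_fun fun n => by rw [ofScalars_apply_eq, smul_eq_mul]
  have heq := hS.hasFPowerSeriesAt.eq_formalMultilinearSeries hΔ.hasFPowerSeriesAt
  rw [ofScalars_series_eq_iff] at heq
  intro n
  have := congrFun heq n
  simpa [dd] using this

end


lemma sum_even (m : ℕ) (F : ℕ → ℂ) (h : ∀ k, ¬ Even k → F k = 0) :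
    ∑ k ∈ Finset.range (2*m), F k = ∑ i ∈ Finset.range m, F (2*i) := by
  induction m with
  | zero => simp
  | succ m ih =>
    rw [show 2*(m+1) = (2*m+1)+1 from by ring, Finset.sum_range_succ, Finset.sum_range_succ,
      Finset.sum_range_succ (fun i => F (2*i)) m, ih,
      h (2*m+1) (by simp [Nat.even_add_one, parity_simps]), add_zero]

noncomputable def EE : ℕ → ℂ := fun n => if Even n then ((D (n/2) : ℚ) : ℂ) else 0

section
variable {r : ℝ≥0} (hr0 : 0 < r) (hrπ : (r:ℝ) < π)
include hr0 hrπ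

lemma coeff_qq : ∀ n, (qq r).coeff n = EE n := by
  intro n
  induction n using Nat.strong_induction_on with
  | _ n ih =>
    rcases Nat.eq_zero_or_pos n with rfl | hn
    · have h0 : ss r 0 = 1 := by simpa using ss_eq hr0 hrπ 0
      have h1 : ss r 0 = (qq r).coeff 0 * cc 0 := by simp [ss]
      rw [h1, cc_zero, mul_one] at h0
      rw [h0]
      simp [EE, (show D 0 = 1 from rfl)]
    · have h0 : ss r n = 0 := by rw [ss_eq hr0 hrπ n, if_neg (by omega)]
      rw [ss, Finset.sum_range_succ, Nat.sub_self, cc_zero, mul_one] at h0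
      have hcoef : (qq r).coeff n = -∑ i ∈ Finset.range n, (qq r).coeff i * cc (n-i) :=
        eq_neg_of_add_eq_zero_right h0
      have hrw : ∀ i ∈ Finset.range n, (qq r).coeff i * cc (n-i) = EE i * cc (n-i) :=
        fun i hi => by rw [ih i (Finset.mem_range.mp hi)]
      rw [Finset.sum_congr rfl hrw] at hcoef
      by_cases hev : Even n
      · obtain ⟨m, hm⟩ := hev
        have hm' : n = 2*m := by omega
        subst hm'
        have hm0 : 0 < m := by omega
        have hconv := conv m
        rw [if_neg (by omega), Finset.sum_range_succ, Nat.sub_self] at hconv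
        have hcQ0 : cQ 0 = 1 := by simp [cQ]
        rw [hcQ0, mul_one] at hconv
        have hDm : D m = -∑ i ∈ Finset.range m, D i * cQ (m - i) :=
          eq_neg_of_add_eq_zero_right hconv
        have hsum2 : ∑ i ∈ Finset.range (2*m), EE i * cc (2*m - i)
            = ∑ j ∈ Finset.range m, ((D j * cQ (m - j) : ℚ) : ℂ) := by
          rw [sum_even m _ (fun k hk => by
            rw [show EE k = 0 from if_neg hk, zero_mul])]
          refine Finset.sum_congr rfl fun j hj => ?_
          rw [Finset.mem_range] at hj
          rw [show EE (2*j) = ((D j : ℚ):ℂ) from by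
              simp only [EE]
              rw [if_pos (even_two_mul j), Nat.mul_div_cancel_left j two_pos],
            show 2*m - 2*j = 2*(m-j) from by omega, cc_two_mul]
          push_cast
          ring
        rw [hsum2] at hcoef
        rw [hcoef, show EE (2*m) = ((D m : ℚ):ℂ) from by
          simp only [EE]
          rw [if_pos (even_two_mul m), Nat.mul_div_cancel_left m two_pos]]
        rw [hDm]
        push_cast
        ring
      · have hz : ∀ i ∈ Finset.range n, EE i * cc (n-i) = 0 := by
          intro i hi
          rw [Finset.mem_range] at hi
          by_cases h2 : Even i
          · rw [cc_odd (fun he => hev (by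
              obtain ⟨p, hp⟩ := h2
              obtain ⟨q, hq⟩ := he
              exact ⟨p+q, by omega⟩)), mul_zero]
          · rw [show EE i = 0 from if_neg h2, zero_mul]
        rw [Finset.sum_eq_zero hz, neg_zero] at hcoef
        rw [hcoef, show EE n = 0 from if_neg hev]

end

theorem hasSum_det_eq_div_sin (z : ℝ) (h0 : 0 < |z|) (hπ : |z| < Real.pi) :
    HasSum (fun p : ℕ => (D p : ℝ) * z ^ (2 * p)) (z / Real.sin z) := by
  set r : ℝ≥0 := ((|z| + π)/2).toNNReal with hr
  have habs : 0 ≤ |z| := abs_nonneg z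
  have hπ0 := Real.pi_pos
  have hrc : (r:ℝ) = (|z| + π)/2 := Real.coe_toNNReal _ (by positivity)
  have hr0 : 0 < r := Real.toNNReal_pos.mpr (by positivity)
  have hrπ : (r:ℝ) < π := by rw [hrc]; linarith
  have hzr : ‖(z:ℂ)‖ < r := by rw [Complex.norm_real, Real.norm_eq_abs, hrc]; linarith
  have h1 := hasSum_ff hr0 hrπ hzr
  have h2 : HasSum (fun n => EE n * (z:ℂ)^n) (ff z) :=
    h1.congr_fun fun n => by rw [coeff_qq hr0 hrπ n]
  have h3 : HasSum ((fun n => EE n * (z:ℂ)^n) ∘ (fun p : ℕ => 2*p)) (ff z) :=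
    (Function.Injective.hasSum_iff two_mul_injective (fun n hn => by
      have hodd : ¬ Even n := fun ⟨p, hp⟩ => hn ⟨p, by show 2*p = n; omega⟩
      show EE n * (z:ℂ)^n = 0
      rw [show EE n = 0 from if_neg hodd, zero_mul])).mpr h2
  have h4 : HasSum (fun p : ℕ => (((D p : ℝ) * z^(2*p) : ℝ) : ℂ)) (ff z) := by
    refine h3.congr_fun fun p => ?_
    show _ = EE (2*p) * (z:ℂ)^(2*p)
    rw [show EE (2*p) = ((D p : ℚ):ℂ) from by
      simp only [EE]
      rw [if_pos (even_two_mul p), Nat.mul_div_cancel_left p two_pos]]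
    push_cast
    ring
  have hff : ff (z:ℂ) = (((z / Real.sin z : ℝ)) : ℂ) := by
    have hz0 : (z:ℂ) ≠ 0 := Complex.ofReal_ne_zero.mpr (abs_pos.mp h0)
    have hgz : gg z = Complex.sin z / z := (eq_div_iff hz0).mpr (gg_mul z)
    show (gg (z:ℂ))⁻¹ = _
    rw [hgz, inv_div, Complex.ofReal_div, Complex.ofReal_sin]
  rw [hff] at h4
  exact Complex.hasSum_ofReal.mp h4
end

section
/- For every integer p ≥ 1, the Riemann zeta function satisfies ζ(2p) = π^{2p} · D_p / (2 · (1 − 2^{1−2p})). -/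
open PowerSeries Finset

lemma exp_sub_one_ne : exp ℚ - 1 ≠ 0 := by
  intro h
  have := congrArg (coeff 1) h
  simp [coeff_exp] at this

lemma key_ps : rescale (2:ℚ) (bernoulliPowerSeries ℚ) * (exp ℚ + 1) = C (2:ℚ) * bernoulliPowerSeries ℚ := by
  have hB := bernoulliPowerSeries_mul_exp_sub_one ℚ
  have hX : rescale (2:ℚ) X = C (2:ℚ) * X := by
    ext n
    simp only [coeff_rescale, coeff_X, coeff_C_mul]
    split <;> simp_all
  have h2 : rescale (2:ℚ) (bernoulliPowerSeries ℚ) * (exp ℚ ^ 2 - 1) = C (2:ℚ) * X := by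
    have h := congrArg (rescale (2:ℚ)) hB
    rw [map_mul, map_sub, map_one, hX] at h
    rw [exp_pow_eq_rescale_exp]
    norm_num
    exact h

  apply mul_right_cancel₀ exp_sub_one_ne
  calc rescale (2:ℚ) (bernoulliPowerSeries ℚ) * (exp ℚ + 1) * (exp ℚ - 1)
      = rescale (2:ℚ) (bernoulliPowerSeries ℚ) * (exp ℚ ^ 2 - 1) := by ring
    _ = C (2:ℚ) * X := h2
    _ = C (2:ℚ) * bernoulliPowerSeries ℚ * (exp ℚ - 1) := by rw [← hB]; ring

lemma sum_choose_two_pow (n : ℕ) :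
    ∑ k ∈ range (n+1), (n.choose k : ℚ) * 2^k * bernoulli k = (2 - 2^n) * bernoulli n := by
  have h := congrArg (coeff n) key_ps
  rw [coeff_mul, Finset.Nat.sum_antidiagonal_eq_sum_range_succ_mk] at h
  simp only [coeff_rescale, bernoulliPowerSeries, coeff_mk, map_add, coeff_exp, coeff_one,
    coeff_C_mul, Algebra.algebraMap_self, map_id, id_eq, RingHom.id_apply] at h
  have hfac : ∀ m : ℕ, (m.factorial : ℚ) ≠ 0 := fun m => by exact_mod_cast m.factorial_ne_zero
  have h2 : ∑ x ∈ range (n+1), (n.factorial : ℚ) *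
      (2 ^ x * (bernoulli x / x.factorial) * (1 / (n - x).factorial + if n - x = 0 then 1 else 0)) =
      (n.factorial : ℚ) * (2 * (bernoulli n / n.factorial)) := by
    rw [← Finset.mul_sum]; exact congrArg _ h
  have step : ∀ x ∈ range (n+1), (n.factorial : ℚ) *
      (2 ^ x * (bernoulli x / x.factorial) * (1 / (n - x).factorial + if n - x = 0 then 1 else 0)) =
      (n.choose x : ℚ) * 2 ^ x * bernoulli x + (if x = n then 2 ^ x * bernoulli x else 0) := by
    intro x hx
    have hxn : x ≤ n := by simpa [Nat.lt_succ_iff] using hx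
    rw [Nat.cast_choose ℚ hxn]
    rcases eq_or_ne x n with rfl | hne
    · simp only [Nat.sub_self, if_pos rfl, Nat.factorial_zero, Nat.cast_one, ↓reduceIte]
      field_simp
    · rw [if_neg (by omega : ¬ n - x = 0), if_neg hne]
      field_simp
      ring
  rw [Finset.sum_congr rfl step, Finset.sum_add_distrib, Finset.sum_ite_eq'] at h2
  rw [if_pos (self_mem_range_succ n)] at h2
  have h3 : (n.factorial : ℚ) * (2 * (bernoulli n / n.factorial)) = 2 * bernoulli n := by
    field_simp
  rw [h3] at h2
  linarith [h2]

lemma bernoulli_odd_zero {n : ℕ} (h : Odd n) (h1 : 1 < n) : bernoulli n = 0 := by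
  rw [bernoulli_eq_bernoulli'_of_ne_one (by omega), bernoulli'_eq_zero_of_odd h h1]

lemma sum_range_pair (f : ℕ → ℚ) (n : ℕ) :
    ∑ i ∈ range (2*n), f i = ∑ j ∈ range n, (f (2*j) + f (2*j+1)) := by
  induction n with
  | zero => simp
  | succ n ih =>
    have h : 2*(n+1) = 2*n+1+1 := by ring
    rw [sum_range_succ, ← ih, h, sum_range_succ, sum_range_succ]
    ring

lemma sum_choose_even (m : ℕ) (hm : 1 ≤ m) :
    ∑ j ∈ range (m+1), ((2*m+1).choose (2*j) : ℚ) * (2^(2*j) - 2) * bernoulli (2*j) = 0 := by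
  have hodd : ∀ j : ℕ, ((2*m+1).choose (2*j+1) : ℚ) * (2^(2*j+1) - 2) * bernoulli (2*j+1) = 0 := by
    intro j
    rcases Nat.eq_zero_or_pos j with rfl | hj
    · norm_num
    · rw [bernoulli_odd_zero ⟨j, by ring⟩ (by omega), mul_zero]
  have hT : ∑ i ∈ range (2*(m+1)), ((2*m+1).choose i : ℚ) * (2^i - 2) * bernoulli i = 0 := by
    have e1 : ∑ i ∈ range (2*(m+1)), ((2*m+1).choose i : ℚ) * (2^i - 2) * bernoulli i
        = ∑ i ∈ range (2*m+2), (((2*m+1).choose i : ℚ) * 2^i * bernoulli i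
            - 2 * (((2*m+1).choose i : ℚ) * bernoulli i)) := by
      rw [(by ring : 2*(m+1) = 2*m+2)]
      exact Finset.sum_congr rfl fun i _ => by ring
    rw [e1, Finset.sum_sub_distrib, ← Finset.mul_sum]
    have e2 : ∑ i ∈ range (2*m+2), ((2*m+1).choose i : ℚ) * 2^i * bernoulli i
        = (2 - 2^(2*m+1)) * bernoulli (2*m+1) := sum_choose_two_pow (2*m+1)
    have e3 : ∑ i ∈ range (2*m+2), ((2*m+1).choose i : ℚ) * bernoulli i
        = ∑ i ∈ range (2*m+1), ((2*m+1).choose i : ℚ) * bernoulli i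
          + ((2*m+1).choose (2*m+1) : ℚ) * bernoulli (2*m+1) := by
      rw [sum_range_succ]
    have e4 : bernoulli (2*m+1) = 0 := bernoulli_odd_zero ⟨m, by ring⟩ (by omega)
    rw [e2, e3, sum_bernoulli, if_neg (by omega), e4]
    ring
  rw [sum_range_pair] at hT
  simpa [hodd] using hT

/-- The closed form for `D`. -/
noncomputable def E (p : ℕ) : ℚ :=
  (-1)^(p+1) * (2^(2*p) - 2) * bernoulli (2*p) / (2*p).factorial

lemma E_zero : E 0 = 1 := by norm_num [E]

lemma Erec (k : ℕ) :
    ∑ i ∈ range (k+1), (-1:ℚ)^(i+k) * (1/((2*(k-i)+3).factorial : ℚ)) * E i = E (k+1) := by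
  have h0 := sum_choose_even (k+1) (by omega)
  rw [sum_range_succ] at h0
  have hch : ((2*(k+1)+1).choose (2*(k+1)) : ℚ) = (2*k+3 : ℕ) := by
    rw [Nat.choose_succ_self_right]
    norm_cast
  have hstep : ∑ i ∈ range (k+1), (-1:ℚ)^(i+k) * (1/((2*(k-i)+3).factorial : ℚ)) * E i
      = (-1:ℚ)^(k+1) / ((2*k+3).factorial : ℚ) *
        ∑ j ∈ range (k+1), ((2*(k+1)+1).choose (2*j) : ℚ) * (2^(2*j) - 2) * bernoulli (2*j) := by
    rw [Finset.mul_sum]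
    refine Finset.sum_congr rfl fun i hi => ?_
    have hik : i ≤ k := by simpa [Nat.lt_succ_iff] using hi
    have hle : 2*i ≤ 2*(k+1)+1 := by omega
    rw [Nat.cast_choose ℚ hle, (by omega : 2*(k+1)+1 - 2*i = 2*(k-i)+3),
      (by omega : 2*(k+1)+1 = 2*k+3)]
    have hsign : (-1:ℚ)^(i+k) * (-1:ℚ)^(i+1) = (-1:ℚ)^(k+1) := by
      rw [← pow_add, (by omega : i+k+(i+1) = 2*i + (k+1)), pow_add, pow_mul]
      norm_num
    have hf1 : ((2*i).factorial : ℚ) ≠ 0 := by exact_mod_cast (2*i).factorial_ne_zero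
    have hf2 : ((2*(k-i)+3).factorial : ℚ) ≠ 0 := by exact_mod_cast (2*(k-i)+3).factorial_ne_zero
    have hf3 : ((2*k+3).factorial : ℚ) ≠ 0 := by exact_mod_cast (2*k+3).factorial_ne_zero
    rw [E]
    field_simp
    ring_nf
    rw [(by rw [mul_comm, pow_mul]; norm_num : (-1:ℚ)^(i*2) = 1)]
    ring
  rw [hstep]
  have hsum : ∑ j ∈ range (k+1), ((2*(k+1)+1).choose (2*j) : ℚ) * (2^(2*j) - 2) * bernoulli (2*j)
      = -((2*k+3 : ℕ) * (2^(2*(k+1)) - 2) * bernoulli (2*(k+1))) := by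
    rw [hch] at h0; linarith
  rw [hsum, E]
  have hfacs : ((2*k+3).factorial : ℚ) = (2*k+3) * ((2*(k+1)).factorial : ℚ) := by
    rw [(by omega : 2*k+3 = (2*(k+1))+1), Nat.factorial_succ]
    push_cast; ring
  have hf4 : ((2*(k+1)).factorial : ℚ) ≠ 0 := by exact_mod_cast (2*(k+1)).factorial_ne_zero
  rw [hfacs]
  have h23 : ((2:ℚ)*k+3) ≠ 0 := by positivity
  push_cast
  field_simp
  ring

def Mmat (k : ℕ) : Matrix (Fin k) (Fin k) ℚ := fun i j =>
  if (i : ℕ) ≤ (j : ℕ) then 1 / ((2 * ((j : ℕ) - (i : ℕ)) + 3).factorial : ℚ)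
  else if (j : ℕ) + 1 = (i : ℕ) then 1 else 0

lemma D_eq_det (k : ℕ) : D k = (Mmat k).det := by
  cases k with
  | zero => simp [D, Matrix.det_fin_zero]
  | succ k => rfl

def Nmat (i k : ℕ) : Matrix (Fin k) (Fin k) ℚ := fun r c =>
  if (r : ℕ) < i then
    (if (r : ℕ) ≤ (c : ℕ) then 1 / ((2 * ((c : ℕ) - (r : ℕ)) + 3).factorial : ℚ)
     else if (c : ℕ) + 1 = (r : ℕ) then 1 else 0)
  else
    (if (r : ℕ) = (c : ℕ) then 1
     else if (r : ℕ) < (c : ℕ) then 1 / ((2 * ((c : ℕ) - (r : ℕ) - 1) + 3).factorial : ℚ)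
     else 0)

lemma Nmat_self (i : ℕ) : Nmat i i = Mmat i := by
  ext r c
  simp only [Nmat, Mmat, if_pos r.isLt]

lemma Nmat_step (i k : ℕ) (h : i ≤ k) : (Nmat i (k+1)).det = (Nmat i k).det := by
  rw [Matrix.det_succ_row (Nmat i (k+1)) (Fin.last k)]
  rw [Finset.sum_eq_single (Fin.last k)]
  · have hrow : Nmat i (k+1) (Fin.last k) (Fin.last k) = 1 := by
      simp [Nmat, Fin.last, not_lt.2 h]
    rw [hrow, Fin.succAbove_last]
    have hsub : (Nmat i (k+1)).submatrix Fin.castSucc Fin.castSucc = Nmat i k := by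
      ext r c
      simp [Nmat, Matrix.submatrix_apply, Fin.coe_castSucc]
    rw [hsub]
    simp [Fin.last]
  · intro j _ hj
    have hj' : (j : ℕ) < k := by
      have := j.isLt
      rcases Nat.lt_or_ge (j : ℕ) k with h' | h'
      · exact h'
      · exfalso; exact hj (Fin.ext (by simp only [Fin.val_last]; omega))
    have hrow : Nmat i (k+1) (Fin.last k) j = 0 := by
      simp only [Nmat, Fin.val_last]
      rw [if_neg (by omega : ¬ k < i), if_neg (by omega : ¬ k = (j:ℕ)),
        if_neg (by omega : ¬ k < (j:ℕ))]
    rw [hrow]; ring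
  · simp

lemma Nmat_det (i k : ℕ) (h : i ≤ k) : (Nmat i k).det = D i := by
  induction k with
  | zero =>
    have : i = 0 := by omega
    subst this
    rw [Nmat_self, ← D_eq_det]
  | succ k ih =>
    rcases Nat.lt_or_ge i (k+1) with h' | h'
    · rw [Nmat_step i k (by omega), ih (by omega)]
    · have : i = k+1 := by omega
      subst this
      rw [Nmat_self, ← D_eq_det]

lemma Drec (k : ℕ) :
    D (k+1) = ∑ i ∈ range (k+1),
      (-1:ℚ)^(i+k) * (1/((2*(k-i)+3).factorial : ℚ)) * D i := by
  rw [D_eq_det, Matrix.det_succ_column (Mmat (k+1)) (Fin.last k)]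
  rw [← Fin.sum_univ_eq_sum_range]
  refine Finset.sum_congr rfl fun i _ => ?_
  have hent : Mmat (k+1) i (Fin.last k) = 1/((2*(k-(i:ℕ))+3).factorial : ℚ) := by
    have : (i:ℕ) ≤ k := by omega
    simp [Mmat, Fin.last, this]
  have hsub : (Mmat (k+1)).submatrix i.succAbove (Fin.last k).succAbove = Nmat i k := by
    rw [Fin.succAbove_last]
    ext r c
    rcases Nat.lt_or_ge (r : ℕ) (i : ℕ) with hr | hr
    · have h1 : i.succAbove r = r.castSucc :=
        Fin.succAbove_of_castSucc_lt i r (by rwa [Fin.lt_iff_val_lt_val])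
      simp only [Matrix.submatrix_apply, h1, Mmat, Nmat, Fin.coe_castSucc, if_pos hr]
    · have h1 : i.succAbove r = r.succ :=
        Fin.succAbove_of_le_castSucc i r (by rwa [Fin.le_iff_val_le_val])
      have hv : ((r.succ : Fin (k+1)) : ℕ) = (r:ℕ)+1 := rfl
      have hv2 : ((c.castSucc : Fin (k+1)) : ℕ) = (c:ℕ) := rfl
      simp only [Matrix.submatrix_apply, h1, Mmat, Nmat, hv, hv2]
      rw [if_neg (by omega : ¬ (r:ℕ) < (i:ℕ))]
      rcases Nat.lt_trichotomy (r : ℕ) (c : ℕ) with hc | hc | hc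
      · rw [if_pos (by omega : (r:ℕ)+1 ≤ (c:ℕ)), if_neg (by omega : ¬ (r:ℕ) = (c:ℕ)),
          if_pos hc]
        rw [(by omega : (c:ℕ) - ((r:ℕ)+1) = (c:ℕ) - (r:ℕ) - 1)]
      · rw [if_neg (by omega : ¬ (r:ℕ)+1 ≤ (c:ℕ)), if_pos (by omega : (c:ℕ)+1 = (r:ℕ)+1),
          if_pos hc]
      · rw [if_neg (by omega : ¬ (r:ℕ)+1 ≤ (c:ℕ)), if_neg (by omega : ¬ (c:ℕ)+1 = (r:ℕ)+1),
          if_neg (by omega : ¬ (r:ℕ) = (c:ℕ)), if_neg (by omega : ¬ (r:ℕ) < (c:ℕ))]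
  rw [hent, hsub, Nmat_det i k (by omega), Fin.val_last]

lemma D_eq_E (p : ℕ) : D p = E p := by
  induction p using Nat.strong_induction_on with
  | _ p ih =>
    match p with
    | 0 => rw [E_zero]; rfl
    | k+1 =>
      rw [Drec k, ← Erec k]
      exact Finset.sum_congr rfl fun i hi => by
        rw [ih i (by simpa [Nat.lt_succ_iff] using Finset.mem_range.mp hi)]

theorem zeta_even_eq_det (p : ℕ) (hp : 1 ≤ p) :
    riemannZeta (2 * p) =
      (Real.pi : ℂ) ^ (2 * p) * (D p : ℂ) /
        (2 * (1 - (2 : ℂ) ^ ((1 : ℤ) - 2 * (p : ℤ)))) := by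
  have hp0 : p ≠ 0 := by omega
  have hz := riemannZeta_two_mul_nat (k := p) hp0
  rw [hz, D_eq_E]
  have hm : ((1:ℤ) - 2*(p:ℤ)) = -((2*p - 1 : ℕ) : ℤ) := by
    have : (((2*p - 1 : ℕ)) : ℤ) = 2*(p:ℤ) - 1 := by omega
    rw [this]; ring
  rw [hm, zpow_neg, zpow_natCast]
  have hE : ((E p : ℚ) : ℂ)
      = (-1)^(p+1) * (2^(2*p) - 2) * ((bernoulli (2*p) : ℚ) : ℂ) / ((2*p).factorial : ℂ) := by
    rw [E]; push_cast; ring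
  rw [hE]
  have hne1 : (2:ℂ)^(2*p-1) ≠ 0 := pow_ne_zero _ two_ne_zero
  have hne2 : ((2*p).factorial : ℂ) ≠ 0 := by exact_mod_cast (2*p).factorial_ne_zero
  have hne3 : (2:ℂ)^(2*p-1) - 1 ≠ 0 := by
    have h1 : ((2^(2*p-1) : ℕ) : ℂ) ≠ ((1:ℕ) : ℂ) := by
      rw [Ne, Nat.cast_inj]
      have := Nat.one_lt_two_pow_iff.mpr (show 2*p-1 ≠ 0 by omega)
      omega
    have h2 : ((2^(2*p-1) : ℕ) : ℂ) = (2:ℂ)^(2*p-1) := by push_cast; ring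
    rw [h2] at h1
    simpa using sub_ne_zero.mpr h1
  have hpow : (2:ℂ)^(2*p) = 2^(2*p-1) * 2 := by
    rw [← pow_succ, (by omega : 2*p - 1 + 1 = 2*p)]
  rw [hpow]
  field_simp
end
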